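/- Let G be a hypoenergetic graph of order p. Then the 2-splitting graph spl₂(G) and the 3-shadow graph D₃(G) are equihypoenergetic: both have 3p vertices, their energies are equal (both equal 3·ε(G)), and both are hypoenergetic, i.e., 3·ε(G) < 3p. -/

import Mathlib

open Matrix SimpleGraph Finset

variable {V W : Type*}

/-- The adjacency matrix of a simple graph over ℝ is Hermitian. -/
lemma adjMatrix_isHermitian [Fintype V] [DecidableEq V] (G : SimpleGraph V)
    [DecidableRel G.Adj] : (G.adjMatrix ℝ).IsHermitian := by
  rw [Matrix.IsHermitian, Matrix.conjTranspose_eq_transpose_of_trivial]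
  exact G.isSymm_adjMatrix

/-- The energy of a finite simple graph: the sum of the absolute values of the
eigenvalues of its real adjacency matrix. -/
noncomputable def graphEnergy [Fintype V] [DecidableEq V] (G : SimpleGraph V) : ℝ := by
  classical
  exact ∑ i, |(adjMatrix_isHermitian G).eigenvalues i|

/-- The spectrum of a finite simple graph: the multiset of eigenvalues (with
multiplicity) of its real adjacency matrix. -/
noncomputable def graphSpectrum [Fintype V] [DecidableEq V] (G : SimpleGraph V) : Multiset ℝ := by
  classical
  exact Finset.univ.val.map (adjMatrix_isHermitian G).eigenvalues

/-- A graph is integral if every eigenvalue of its adjacency matrix is an integer. -/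
def IsIntegralGraph [Fintype V] [DecidableEq V] (G : SimpleGraph V) : Prop :=
  ∀ x ∈ graphSpectrum G, ∃ k : ℤ, x = (k : ℝ)

/-- The m-shadow graph of `G`, on vertex set `Fin m × V`: `(i,u)` and `(j,v)` are
adjacent iff `u` and `v` are adjacent in `G`. -/
def shadowGraph (m : ℕ) (G : SimpleGraph V) : SimpleGraph (Fin m × V) where
  Adj x y := G.Adj x.2 y.2
  symm := ⟨fun _ _ h => h.symm⟩
  loopless := ⟨fun _ h => G.loopless.irrefl _ h⟩

/-- The duplicate graph of `G`, on vertex set `V ⊕ V`: `inl a` is adjacent to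
`inr b` iff `a` and `b` are adjacent in `G`; no other adjacencies. -/
def duplicateGraph (G : SimpleGraph V) : SimpleGraph (V ⊕ V) where
  Adj x y :=
    match x, y with
    | Sum.inl a, Sum.inr b => G.Adj a b
    | Sum.inr a, Sum.inl b => G.Adj a b
    | _, _ => False
  symm := ⟨by rintro (a | a) (b | b) h <;> first | exact h.symm | exact h.elim⟩
  loopless := ⟨by rintro (a | a) h <;> exact h⟩

/-- The Kronecker (tensor) product of two simple graphs. -/
def tensorGraph (G : SimpleGraph V) (H : SimpleGraph W) : SimpleGraph (V × W) where
  Adj x y := G.Adj x.1 y.1 ∧ H.Adj x.2 y.2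
  symm := ⟨fun _ _ h => ⟨h.1.symm, h.2.symm⟩⟩
  loopless := ⟨fun _ h => G.loopless.irrefl _ h.1⟩

/-- The m-splitting graph of `G`, on vertex set `V ⊕ (Fin m × V)`: original
vertices keep their adjacencies, an original vertex `u` is adjacent to a copy
`(i,v)` iff `u` is adjacent to `v` in `G`, and copies are pairwise non-adjacent. -/
def splittingGraph (m : ℕ) (G : SimpleGraph V) : SimpleGraph (V ⊕ (Fin m × V)) where
  Adj x y :=
    match x, y with
    | Sum.inl u, Sum.inl v => G.Adj u v
    | Sum.inl u, Sum.inr iv => G.Adj u iv.2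
    | Sum.inr iu, Sum.inl v => G.Adj iu.2 v
    | Sum.inr _, Sum.inr _ => False
  symm := ⟨by rintro (u | iu) (v | iv) h <;> first | exact h.symm | exact h.elim⟩
  loopless := ⟨by rintro (u | iu) h <;> first | exact G.loopless.irrefl _ h | exact h⟩

/-- The join of two simple graphs: their disjoint union together with all edges
between the two parts. -/
def joinGraph (G : SimpleGraph V) (H : SimpleGraph W) : SimpleGraph (V ⊕ W) where
  Adj x y :=
    match x, y with
    | Sum.inl a, Sum.inl b => G.Adj a b
    | Sum.inr a, Sum.inr b => H.Adj a b
    | _, _ => True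
  symm := ⟨by rintro (a | a) (b | b) h <;> first | exact h.symm | trivial⟩
  loopless := ⟨by rintro (a | a) h <;> first | exact G.loopless.irrefl _ h | exact H.loopless.irrefl _ h⟩

/-- The superpath graph on a sequence of part sizes: independent sets `W i` of
size `a i`, where vertices in parts `i` and `j` are adjacent iff `|i - j| = 1`. -/
def superpathGraph {t : ℕ} (a : Fin t → ℕ) : SimpleGraph (Σ i : Fin t, Fin (a i)) where
  Adj x y := (x.1 : ℕ) + 1 = (y.1 : ℕ) ∨ (y.1 : ℕ) + 1 = (x.1 : ℕ)
  symm := ⟨fun _ _ h => h.symm⟩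
  loopless := ⟨fun x h => by omega⟩


section MyAux

open Polynomial

namespace MyEnergyAux

variable {n : Type*} [Fintype n] [DecidableEq n] {R : Type*} [CommRing R]

lemma my_charpoly_conj (P M Q : Matrix n n R) (h : P * Q = 1) :
    (P * M * Q).charpoly = M.charpoly := by
  have key : charmatrix (P * M * Q) = P.map C * charmatrix M * Q.map C := by
    unfold charmatrix
    rw [mul_sub, sub_mul]
    congr 1
    · have hs : (Matrix.scalar n (X : R[X])) = (X : R[X]) • (1 : Matrix n n R[X]) := by
        ext i j
        by_cases hij : i = j <;>
          simp [Matrix.scalar_apply, Matrix.one_apply, Matrix.diagonal_apply, hij]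
      rw [hs, mul_smul_comm, mul_one, smul_mul_assoc, ← Matrix.map_mul, h]
      simp
    · simp only [RingHom.mapMatrix_apply]
      rw [← Matrix.map_mul, ← Matrix.map_mul]
  have h2 : Q * P = 1 := mul_eq_one_comm.mp h
  unfold Matrix.charpoly
  rw [key, det_mul, det_mul, mul_comm, ← mul_assoc, ← det_mul, ← Matrix.map_mul, h2]
  simp

lemma my_charpoly_diagonal (d : n → R) :
    (Matrix.diagonal d).charpoly = ∏ i, (X - C (d i)) := by
  have : charmatrix (Matrix.diagonal d) = Matrix.diagonal fun i => X - C (d i) := by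
    ext i j
    by_cases hij : i = j
    · subst hij; simp [charmatrix_apply]
    · simp [charmatrix_apply_ne _ _ _ hij, Matrix.diagonal_apply_ne _ hij,
        Matrix.diagonal_apply_ne', hij]
  rw [Matrix.charpoly, this, det_diagonal]

lemma my_charpoly_blockDiagonal {o : Type*} [Fintype o] [DecidableEq o]
    (f : o → Matrix n n R) :
    (Matrix.blockDiagonal f).charpoly = ∏ i, (f i).charpoly := by
  have : charmatrix (Matrix.blockDiagonal f) = Matrix.blockDiagonal fun i => charmatrix (f i) := by
    ext ⟨i, k⟩ ⟨j, l⟩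
    by_cases hkl : k = l
    · subst hkl
      by_cases hij : i = j
      · subst hij; simp [charmatrix_apply, Matrix.blockDiagonal_apply, Matrix.diagonal_apply]
      · simp [charmatrix_apply, Matrix.blockDiagonal_apply, Matrix.diagonal_apply, hij,
          Prod.ext_iff]
    · simp [charmatrix_apply, Matrix.blockDiagonal_apply, Matrix.diagonal_apply, hkl,
        Prod.ext_iff]
  rw [Matrix.charpoly, this, Matrix.det_blockDiagonal]
  rfl

lemma my_charpoly_smul_hermitian (A : Matrix n n ℝ) (hA : A.IsHermitian) (c : ℝ) :
    (c • A).charpoly = ∏ i, (X - C (c * hA.eigenvalues i)) := by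
  set U : Matrix n n ℝ := (Matrix.IsHermitian.eigenvectorUnitary hA : Matrix n n ℝ) with hU
  have hUU : U * star U = 1 :=
    Matrix.mem_unitaryGroup_iff.mp (Matrix.IsHermitian.eigenvectorUnitary hA).2
  have hspec : c • A = U * Matrix.diagonal (fun i => c * hA.eigenvalues i) * star U := by
    conv_lhs => rw [hA.spectral_theorem, Unitary.conjStarAlgAut_apply]
    rw [← hU, ← smul_mul_assoc, ← mul_smul_comm, ← Matrix.diagonal_smul]
    congr 2
  rw [hspec, my_charpoly_conj _ _ _ hUU, my_charpoly_diagonal]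

lemma my_roots_prod_linear (f : n → ℝ) :
    (∏ i, (X - C (f i))).roots = Finset.univ.val.map f := by
  have h : (∏ i, (X - C (f i))) = ((Finset.univ.val.map f).map (fun a => X - C a)).prod := by
    rw [Multiset.map_map]; rfl
  rw [h, Polynomial.roots_multiset_prod_X_sub_C]

end MyEnergyAux

open MyEnergyAux

lemma my_adjMatrix_charpoly [Fintype V] [DecidableEq V] (G : SimpleGraph V)
    [inst : DecidableRel G.Adj] :
    (G.adjMatrix ℝ).charpoly = ∏ i, (X - C ((adjMatrix_isHermitian G).eigenvalues i)) := by
  have := my_charpoly_smul_hermitian (G.adjMatrix ℝ) (adjMatrix_isHermitian G) 1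
  simpa using this

lemma my_energy_eq_roots [Fintype V] [DecidableEq V] (G : SimpleGraph V)
    [inst : DecidableRel G.Adj] :
    graphEnergy G = ((G.adjMatrix ℝ).charpoly.roots.map (fun x => |x|)).sum := by
  have key : ∀ (i2 : DecidableRel G.Adj),
      (((@SimpleGraph.adjMatrix ℝ V G i2 _ _).charpoly.roots).map (fun x => |x|)).sum
        = ∑ i, |(@adjMatrix_isHermitian V _ _ G i2).eigenvalues i| := by
    intro i2
    rw [@my_adjMatrix_charpoly V _ _ G i2, my_roots_prod_linear, Multiset.map_map]
    rfl
  have hinst : ∀ (i2 : DecidableRel G.Adj),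
      @SimpleGraph.adjMatrix ℝ V G i2 _ _ = @SimpleGraph.adjMatrix ℝ V G inst _ _ := by
    intro i2
    have : i2 = inst := by
      funext a b
      exact Subsingleton.elim _ _
    rw [this]
  unfold graphEnergy
  rw [← key _]
  rw [hinst]

lemma my_energy_eq_sum [Fintype V] [DecidableEq V] (G : SimpleGraph V)
    [inst : DecidableRel G.Adj] :
    graphEnergy G = ∑ i, |(adjMatrix_isHermitian G).eigenvalues i| := by
  rw [my_energy_eq_roots, my_adjMatrix_charpoly, my_roots_prod_linear, Multiset.map_map]
  rfl

open Kronecker in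
lemma my_energy_kron [Fintype V] [DecidableEq V] [Fintype W] [DecidableEq W]
    (G : SimpleGraph V) [DecidableRel G.Adj] (H : SimpleGraph W) [DecidableRel H.Adj]
    (e : W ≃ Fin 3 × V) (P Q : Matrix (Fin 3) (Fin 3) ℝ) (d : Fin 3 → ℝ)
    (hPQ : P * Q = 1)
    (hre : (Matrix.reindex e e (H.adjMatrix ℝ)) = (P * Matrix.diagonal d * Q) ⊗ₖ (G.adjMatrix ℝ)) :
    graphEnergy H = (∑ i, |d i|) * graphEnergy G := by
  set A := G.adjMatrix ℝ with hA
  set lam := (adjMatrix_isHermitian G).eigenvalues with hlam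
  have hkron : (P * Matrix.diagonal d * Q) ⊗ₖ A
      = (P ⊗ₖ (1 : Matrix V V ℝ)) * ((Matrix.diagonal d) ⊗ₖ A) * (Q ⊗ₖ (1 : Matrix V V ℝ)) := by
    rw [← Matrix.mul_kronecker_mul, ← Matrix.mul_kronecker_mul, one_mul, mul_one]
  have hPQ1 : (P ⊗ₖ (1 : Matrix V V ℝ)) * (Q ⊗ₖ (1 : Matrix V V ℝ)) = 1 := by
    rw [← Matrix.mul_kronecker_mul, hPQ, one_mul, Matrix.one_kronecker_one]
  have hcp : (H.adjMatrix ℝ).charpoly = ∏ p : Fin 3 × V, (X - C (d p.1 * lam p.2)) := by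
    calc (H.adjMatrix ℝ).charpoly
        = (Matrix.reindex e e (H.adjMatrix ℝ)).charpoly := (Matrix.charpoly_reindex e _).symm
      _ = ((Matrix.diagonal d) ⊗ₖ A).charpoly := by
          rw [hre, hkron, my_charpoly_conj _ _ _ hPQ1]
      _ = (Matrix.blockDiagonal fun i => d i • A).charpoly := by
          rw [Matrix.diagonal_kronecker, Matrix.charpoly_reindex]
      _ = ∏ i, (d i • A).charpoly := my_charpoly_blockDiagonal _
      _ = ∏ i, ∏ j, (X - C (d i * lam j)) := by
          refine Finset.prod_congr rfl fun i _ => ?_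
          exact my_charpoly_smul_hermitian A (adjMatrix_isHermitian G) (d i)
      _ = ∏ p : Fin 3 × V, (X - C (d p.1 * lam p.2)) := by
          rw [← Finset.prod_product']
          rfl
  have hroots : (H.adjMatrix ℝ).charpoly.roots
      = (Finset.univ.val : Multiset (Fin 3 × V)).map (fun p => d p.1 * lam p.2) := by
    rw [hcp, my_roots_prod_linear]
  rw [my_energy_eq_roots, hroots, Multiset.map_map]
  have hms : ((Finset.univ.val : Multiset (Fin 3 × V)).map
      ((fun x => |x|) ∘ fun p => d p.1 * lam p.2)).sum
      = ∑ p : Fin 3 × V, |d p.1 * lam p.2| := rfl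
  rw [hms, my_energy_eq_sum G, Finset.sum_mul_sum, Fintype.sum_prod_type]
  refine Finset.sum_congr rfl fun i _ => Finset.sum_congr rfl fun j _ => ?_
  rw [abs_mul]

/-- The reindexing equivalence for the 2-splitting graph. -/
def mySplEquiv (V : Type*) : (V ⊕ (Fin 2 × V)) ≃ (Fin 3 × V) where
  toFun x := match x with
    | Sum.inl v => ((0 : Fin 3), v)
    | Sum.inr (i, v) => (i.succ, v)
  invFun p := ![Sum.inl p.2, Sum.inr ((0 : Fin 2), p.2), Sum.inr ((1 : Fin 2), p.2)] p.1
  left_inv := by rintro (v | ⟨i, v⟩); · rfl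
                 fin_cases i <;> rfl
  right_inv := by rintro ⟨i, v⟩; fin_cases i <;> rfl

end MyAux

/-- If `G` is a hypoenergetic graph of order `p`, then the 2-splitting graph
`spl₂(G)` and the 3-shadow graph `D₃(G)` are equihypoenergetic: both have
`3 * p` vertices, both have energy `3 · ε(G)`, and `3 · ε(G) < 3 * p`. -/
theorem splitting_shadow_equihypoenergetic [Fintype V] [DecidableEq V]
    (G : SimpleGraph V) (p : ℕ) (hp : Fintype.card V = p)
    (hyp : graphEnergy G < p) :
    Fintype.card (V ⊕ (Fin 2 × V)) = 3 * p ∧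
      Fintype.card (Fin 3 × V) = 3 * p ∧
      graphEnergy (splittingGraph 2 G) = 3 * graphEnergy G ∧
      graphEnergy (shadowGraph 3 G) = 3 * graphEnergy G ∧
      3 * graphEnergy G < 3 * (p : ℝ) := by
  classical
  have hcard1 : Fintype.card (V ⊕ (Fin 2 × V)) = 3 * p := by
    simp [Fintype.card_sum, Fintype.card_prod, hp]; omega
  have hcard2 : Fintype.card (Fin 3 × V) = 3 * p := by
    simp [Fintype.card_prod, hp]
  -- concrete 3×3 matrices
  set P1 : Matrix (Fin 3) (Fin 3) ℝ := !![2,1,0;1,-1,1;1,-1,-1] with hP1def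
  set Q1 : Matrix (Fin 3) (Fin 3) ℝ :=
    !![1/3, 1/6, 1/6; 1/3, -1/3, -1/3; 0, 1/2, -1/2] with hQ1def
  set P2 : Matrix (Fin 3) (Fin 3) ℝ := !![1,1,1;1,-1,0;1,0,-1] with hP2def
  set Q2 : Matrix (Fin 3) (Fin 3) ℝ :=
    !![1/3, 1/3, 1/3; 1/3, -2/3, 1/3; 1/3, 1/3, -2/3] with hQ2def
  have hP1Q1 : P1 * Q1 = 1 := by
    ext i j
    fin_cases i <;> fin_cases j <;>
      norm_num [hP1def, hQ1def, Matrix.mul_apply, Fin.sum_univ_three, Fin.ext_iff, Matrix.vecMul, dotProduct, Matrix.vecHead, Matrix.vecTail, Function.comp, Matrix.one_apply] <;> simp <;> norm_num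
  have hP2Q2 : P2 * Q2 = 1 := by
    ext i j
    fin_cases i <;> fin_cases j <;>
      norm_num [hP2def, hQ2def, Matrix.mul_apply, Fin.sum_univ_three, Fin.ext_iff, Matrix.vecMul, dotProduct, Matrix.vecHead, Matrix.vecTail, Function.comp, Matrix.one_apply] <;> simp <;> norm_num
  have hM1 : P1 * Matrix.diagonal ![2,-1,0] * Q1 = !![1,1,1;1,0,0;1,0,0] := by
    ext i j
    fin_cases i <;> fin_cases j <;>
      norm_num [hP1def, hQ1def, Matrix.mul_apply, Fin.sum_univ_three, Fin.ext_iff, Matrix.vecMul, dotProduct, Matrix.vecHead, Matrix.vecTail, Function.comp, Matrix.diagonal_apply] <;> simp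
  have hM2 : P2 * Matrix.diagonal ![3,0,0] * Q2 = Matrix.of fun _ _ => (1 : ℝ) := by
    ext i j
    fin_cases i <;> fin_cases j <;>
      norm_num [hP2def, hQ2def, Matrix.mul_apply, Fin.sum_univ_three, Fin.ext_iff, Matrix.vecMul, dotProduct, Matrix.vecHead, Matrix.vecTail, Function.comp, Matrix.diagonal_apply] <;> simp
  -- the splitting graph
  have hreSpl : (Matrix.reindex (mySplEquiv V) (mySplEquiv V)
        ((splittingGraph 2 G).adjMatrix ℝ))
      = Matrix.kronecker (P1 * Matrix.diagonal ![2,-1,0] * Q1) (G.adjMatrix ℝ) := by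
    rw [hM1]
    ext ⟨i, u⟩ ⟨j, v⟩
    fin_cases i <;> fin_cases j <;>
      simp [Matrix.reindex_apply, mySplEquiv, Matrix.kronecker, Matrix.kroneckerMap_apply,
        splittingGraph, SimpleGraph.adjMatrix, Matrix.vecHead, Matrix.vecTail, Function.comp] <;> congr
  have hreSh : (Matrix.reindex (Equiv.refl (Fin 3 × V)) (Equiv.refl (Fin 3 × V))
        ((shadowGraph 3 G).adjMatrix ℝ))
      = Matrix.kronecker (P2 * Matrix.diagonal ![3,0,0] * Q2) (G.adjMatrix ℝ) := by
    rw [hM2]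
    ext ⟨i, u⟩ ⟨j, v⟩
    simp [Matrix.reindex_apply, Matrix.kronecker, Matrix.kroneckerMap_apply,
      shadowGraph, SimpleGraph.adjMatrix, Matrix.vecHead, Matrix.vecTail, Function.comp] <;> congr
  have hd1 : (∑ i, |(![2,-1,0] : Fin 3 → ℝ) i|) = 3 := by
    norm_num [Fin.sum_univ_three] <;> rfl
  have hd2 : (∑ i, |(![3,0,0] : Fin 3 → ℝ) i|) = 3 := by
    norm_num [Fin.sum_univ_three] <;> rfl
  have hE1 : graphEnergy (splittingGraph 2 G) = 3 * graphEnergy G := by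
    rw [my_energy_kron G (splittingGraph 2 G) (mySplEquiv V) P1 Q1 ![2,-1,0] hP1Q1 hreSpl, hd1]
  have hE2 : graphEnergy (shadowGraph 3 G) = 3 * graphEnergy G := by
    rw [my_energy_kron G (shadowGraph 3 G) (Equiv.refl _) P2 Q2 ![3,0,0] hP2Q2 hreSh, hd2]
  refine ⟨hcard1, hcard2, hE1, hE2, ?_⟩
  linarith
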